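/- For every κ ≥ 1/2 one has |κ⁻¹ xᵀr| ≤ λ̂/4, the matrix Λ − s(κ)I with s(κ) := λ₁ − κ⁻¹ xᵀr is invertible with ‖(Λ − s(κ)I)⁻¹‖ ≤ 2 λ̂⁻¹ (spectral norm), and the function f(κ) := κ² + ‖(Λ − s(κ)I)⁻¹ Xᵀr‖² − 1 − ρ is strictly increasing on [1/2, ∞); moreover f(1/2) < 0 and f(2) > 0, so f has a unique zero on [1/2, ∞), and this zero lies in the open interval (1/2, 2). -/

import Mathlib

open Matrix

lemma aux_diag_sub {n : ℕ} (v : Fin n → ℝ) (s : ℝ) :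
    Matrix.diagonal v - s • (1 : Matrix (Fin n) (Fin n) ℝ) =
      Matrix.diagonal (fun j => v j - s) := by
  ext i j
  by_cases h : i = j <;> simp [Matrix.one_apply, h]

lemma aux_diag_inv {n : ℕ} (v : Fin n → ℝ) (hv : ∀ j, v j ≠ 0) :
    (Matrix.diagonal v)⁻¹ = Matrix.diagonal (fun j => (v j)⁻¹) := by
  apply Matrix.inv_eq_right_inv
  rw [Matrix.diagonal_mul_diagonal]
  convert Matrix.diagonal_one with j
  exact mul_inv_cancel₀ (hv j)

lemma aux_inv_sq_diff {m u v : ℝ} (hm : 0 < m) (hu : m ≤ u) (hv : m ≤ v) :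
    |(v ^ 2)⁻¹ - (u ^ 2)⁻¹| ≤ 2 / m ^ 3 * |u - v| := by
  have hu0 : 0 < u := lt_of_lt_of_le hm hu
  have hv0 : 0 < v := lt_of_lt_of_le hm hv
  have h1 : (v ^ 2)⁻¹ - (u ^ 2)⁻¹ = ((u - v) * (u + v)) / (u ^ 2 * v ^ 2) := by
    field_simp; ring
  rw [h1, abs_div, abs_mul, abs_of_pos (by positivity : (0:ℝ) < u ^ 2 * v ^ 2),
    abs_of_pos (by positivity : (0:ℝ) < u + v),
    div_le_iff₀ (by positivity : (0:ℝ) < u ^ 2 * v ^ 2), div_mul_eq_mul_div, div_mul_eq_mul_div,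
    le_div_iff₀ (by positivity : (0:ℝ) < m ^ 3)]
  have key : (u + v) * m ^ 3 ≤ 2 * (u ^ 2 * v ^ 2) := by
    nlinarith [mul_le_mul hu hv hm.le hu0.le, sq_nonneg (u - v), mul_pos hu0 hv0,
      mul_le_mul (mul_le_mul hu hv hm.le hu0.le) hv hm.le (by positivity),
      mul_le_mul (mul_le_mul hu hv hm.le hu0.le) hu hm.le (by positivity)]
  nlinarith [mul_le_mul_of_nonneg_left key (abs_nonneg (u - v))]

set_option maxHeartbeats 1000000 in
/-- Auxiliary facts from the proof of Lemma 5.6 (i): bounds on the shifted resolvent,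
strict monotonicity of `f`, sign changes and the unique zero of `f` on `[1/2, ∞)`. -/
theorem stmt3 (N : ℕ) (hN : 2 ≤ N)
    (S : Matrix (Fin N) (Fin N) ℝ)
    (x : Fin N → ℝ) (X : Matrix (Fin N) (Fin (N - 1)) ℝ)
    (lam1 : ℝ) (lam2 : Fin (N - 1) → ℝ)
    (hSx : S *ᵥ x = lam1 • x)
    (hSX : ∀ j, S *ᵥ (fun i => X i j) = lam2 j • (fun i => X i j))
    (hxx : x ⬝ᵥ x = 1)
    (hxX : ∀ j, x ⬝ᵥ (fun i => X i j) = 0)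
    (hXX : ∀ j k, (fun i => X i j) ⬝ᵥ (fun i => X i k) = if j = k then (1 : ℝ) else 0)
    (hord : Antitone lam2)
    (hsep : lam2 ⟨0, by omega⟩ < lam1)
    (lamhat : ℝ) (hlamhat : lamhat = lam1 - lam2 ⟨0, by omega⟩)
    (ρ : ℝ) (r : Fin N → ℝ)
    (hρ : |ρ| ≤ 1 / 2)
    (hr : Real.sqrt (r ⬝ᵥ r) ≤ lamhat / 8)
    (sfun : ℝ → ℝ) (hsfun : sfun = fun κ => lam1 - κ⁻¹ * (x ⬝ᵥ r))
    (f : ℝ → ℝ)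
    (hf : f = fun κ =>
      κ ^ 2 +
        (((Matrix.diagonal lam2 - sfun κ • (1 : Matrix (Fin (N - 1)) (Fin (N - 1)) ℝ))⁻¹ *ᵥ
            (Xᵀ *ᵥ r)) ⬝ᵥ
          ((Matrix.diagonal lam2 - sfun κ • (1 : Matrix (Fin (N - 1)) (Fin (N - 1)) ℝ))⁻¹ *ᵥ
            (Xᵀ *ᵥ r))) - 1 - ρ) :
    (∀ κ : ℝ, 1 / 2 ≤ κ →
      |κ⁻¹ * (x ⬝ᵥ r)| ≤ lamhat / 4 ∧
      IsUnit (Matrix.diagonal lam2 - sfun κ • (1 : Matrix (Fin (N - 1)) (Fin (N - 1)) ℝ)) ∧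
      ∀ z : Fin (N - 1) → ℝ,
        Real.sqrt
            (((Matrix.diagonal lam2 - sfun κ • (1 : Matrix (Fin (N - 1)) (Fin (N - 1)) ℝ))⁻¹ *ᵥ z) ⬝ᵥ
              ((Matrix.diagonal lam2 - sfun κ • (1 : Matrix (Fin (N - 1)) (Fin (N - 1)) ℝ))⁻¹ *ᵥ z))
          ≤ 2 * lamhat⁻¹ * Real.sqrt (z ⬝ᵥ z)) ∧
    StrictMonoOn f (Set.Ici (1 / 2 : ℝ)) ∧
    f (1 / 2) < 0 ∧ 0 < f 2 ∧
    ∃ κ₀ : ℝ, (κ₀ ∈ Set.Ioo (1 / 2 : ℝ) 2 ∧ f κ₀ = 0) ∧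
      ∀ κ' ∈ Set.Ici (1 / 2 : ℝ), f κ' = 0 → κ' = κ₀ := by
  have hlam : 0 < lamhat := by rw [hlamhat]; linarith
  set c : ℝ := x ⬝ᵥ r with hc
  set b : Fin (N - 1) → ℝ := Xᵀ *ᵥ r with hb
  have hrr0 : 0 ≤ r ⬝ᵥ r := by
    simpa [dotProduct, ← sq] using Finset.sum_nonneg fun i _ => sq_nonneg (r i)
  have hrr : r ⬝ᵥ r ≤ (lamhat / 8) ^ 2 := by
    have := Real.sq_sqrt hrr0
    nlinarith [Real.sqrt_nonneg (r ⬝ᵥ r)]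
  -- Cauchy–Schwarz: c² ≤ r⬝r
  have hc2 : c ^ 2 ≤ r ⬝ᵥ r := by
    have hxx' : ∑ i, x i ^ 2 = 1 := by simpa [dotProduct, ← sq] using hxx
    have := Finset.sum_mul_sq_le_sq_mul_sq Finset.univ x r
    rw [hxx', one_mul] at this
    simpa [dotProduct, hc, ← sq] using this
  have hcabs : |c| ≤ lamhat / 8 := by
    have h1 : c ^ 2 ≤ (lamhat / 8) ^ 2 := le_trans hc2 hrr
    have h2 := Real.sqrt_le_sqrt h1
    rwa [Real.sqrt_sq_eq_abs, Real.sqrt_sq (by positivity)] at h2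
  -- Bessel: b⬝b ≤ r⬝r
  have hXtX : Xᵀ * X = 1 := by
    ext j k
    simpa [Matrix.mul_apply, Matrix.one_apply, dotProduct] using hXX j k
  have hbb : b ⬝ᵥ b ≤ r ⬝ᵥ r := by
    have hq : (X *ᵥ b) ⬝ᵥ (X *ᵥ b) = b ⬝ᵥ b := by
      rw [Matrix.dotProduct_mulVec, ← Matrix.mulVec_transpose, Matrix.mulVec_mulVec, hXtX,
        Matrix.one_mulVec]
    have hrq : r ⬝ᵥ (X *ᵥ b) = b ⬝ᵥ b := by
      rw [Matrix.dotProduct_mulVec, ← Matrix.mulVec_transpose, hb]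
    have hCS : (r ⬝ᵥ (X *ᵥ b)) ^ 2 ≤ (r ⬝ᵥ r) * ((X *ᵥ b) ⬝ᵥ (X *ᵥ b)) := by
      have := Finset.sum_mul_sq_le_sq_mul_sq Finset.univ r (X *ᵥ b)
      simpa [dotProduct, ← sq] using this
    rw [hrq, hq] at hCS
    have hbb0 : 0 ≤ b ⬝ᵥ b := by
      simpa [dotProduct, ← sq] using Finset.sum_nonneg fun i _ => sq_nonneg (b i)
    rcases hbb0.eq_or_lt with h | h
    · linarith
    · nlinarith
  have hbb' : ∑ j, b j ^ 2 ≤ (lamhat / 8) ^ 2 := by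
    have : b ⬝ᵥ b = ∑ j, b j ^ 2 := by simp [dotProduct, ← sq]
    linarith [hbb, hrr, this ▸ hbb]
  -- first key bound
  have habs : ∀ κ : ℝ, 1 / 2 ≤ κ → |κ⁻¹ * c| ≤ lamhat / 4 := by
    intro κ hκ
    have hκ0 : 0 < κ := by linarith
    have hinv : κ⁻¹ ≤ 2 := by
      rw [show (2:ℝ) = (1/2 : ℝ)⁻¹ by norm_num]
      exact inv_anti₀ (by norm_num) hκ
    rw [abs_mul, abs_of_pos (inv_pos.mpr hκ0)]
    calc κ⁻¹ * |c| ≤ 2 * (lamhat / 8) := by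
          apply mul_le_mul hinv hcabs (abs_nonneg c) (by norm_num)
      _ = lamhat / 4 := by ring
  -- gap bound
  have hmono2 : ∀ j : Fin (N - 1), lam2 j ≤ lam2 ⟨0, by omega⟩ :=
    fun j => hord (by simp [Fin.le_def])
  have hgap : ∀ κ : ℝ, 1 / 2 ≤ κ → ∀ j, sfun κ - lam2 j ≥ 3 / 4 * lamhat := by
    intro κ hκ j
    have h1 := abs_le.mp (habs κ hκ)
    have h2 := hmono2 j
    rw [hsfun]
    simp only
    rw [hlamhat] at h1 ⊢
    linarith [h1.2]
  have hm0 : 0 < 3 / 4 * lamhat := by linarith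
  have hne : ∀ κ : ℝ, 1 / 2 ≤ κ → ∀ j, lam2 j - sfun κ ≠ 0 := by
    intro κ hκ j
    have := hgap κ hκ j
    intro h; nlinarith
  have hDinv : ∀ κ : ℝ, 1 / 2 ≤ κ → ∀ z : Fin (N - 1) → ℝ,
      (Matrix.diagonal lam2 - sfun κ • (1 : Matrix (Fin (N - 1)) (Fin (N - 1)) ℝ))⁻¹ *ᵥ z =
        fun j => (lam2 j - sfun κ)⁻¹ * z j := by
    intro κ hκ z
    rw [aux_diag_sub, aux_diag_inv _ (hne κ hκ)]
    ext j
    simp [Matrix.mulVec_diagonal]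
  have hquad : ∀ κ : ℝ, 1 / 2 ≤ κ → ∀ z : Fin (N - 1) → ℝ,
      ((Matrix.diagonal lam2 - sfun κ • (1 : Matrix (Fin (N - 1)) (Fin (N - 1)) ℝ))⁻¹ *ᵥ z) ⬝ᵥ
          ((Matrix.diagonal lam2 - sfun κ • (1 : Matrix (Fin (N - 1)) (Fin (N - 1)) ℝ))⁻¹ *ᵥ z) =
        ∑ j, z j ^ 2 * (((sfun κ - lam2 j) ^ 2)⁻¹) := by
    intro κ hκ z
    rw [hDinv κ hκ z]
    simp only [dotProduct]
    refine Finset.sum_congr rfl fun j _ => ?_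
    have h1 : (lam2 j - sfun κ) ^ 2 = (sfun κ - lam2 j) ^ 2 := by ring
    rw [show (lam2 j - sfun κ)⁻¹ * z j * ((lam2 j - sfun κ)⁻¹ * z j)
        = z j ^ 2 * (((lam2 j - sfun κ) ^ 2)⁻¹) by rw [← inv_pow]; ring, h1]
  have hfeq : ∀ κ : ℝ, 1 / 2 ≤ κ →
      f κ = κ ^ 2 + (∑ j, b j ^ 2 * (((sfun κ - lam2 j) ^ 2)⁻¹)) - 1 - ρ := by
    intro κ hκ
    rw [hf]
    simp only
    rw [hquad κ hκ b]
  -- Part A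
  have partA : ∀ κ : ℝ, 1 / 2 ≤ κ →
      |κ⁻¹ * c| ≤ lamhat / 4 ∧
      IsUnit (Matrix.diagonal lam2 - sfun κ • (1 : Matrix (Fin (N - 1)) (Fin (N - 1)) ℝ)) ∧
      ∀ z : Fin (N - 1) → ℝ,
        Real.sqrt
            (((Matrix.diagonal lam2 - sfun κ • (1 : Matrix (Fin (N - 1)) (Fin (N - 1)) ℝ))⁻¹ *ᵥ z) ⬝ᵥ
              ((Matrix.diagonal lam2 - sfun κ • (1 : Matrix (Fin (N - 1)) (Fin (N - 1)) ℝ))⁻¹ *ᵥ z))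
          ≤ 2 * lamhat⁻¹ * Real.sqrt (z ⬝ᵥ z) := by
    intro κ hκ
    refine ⟨habs κ hκ, ?_, ?_⟩
    · rw [aux_diag_sub]
      have hmul : Matrix.diagonal (fun j => lam2 j - sfun κ) *
          Matrix.diagonal (fun j => (lam2 j - sfun κ)⁻¹) = 1 := by
        rw [Matrix.diagonal_mul_diagonal]
        convert Matrix.diagonal_one with j
        exact mul_inv_cancel₀ (hne κ hκ j)
      have hmul' : Matrix.diagonal (fun j => (lam2 j - sfun κ)⁻¹) *
          Matrix.diagonal (fun j => lam2 j - sfun κ) = 1 := by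
        rw [Matrix.diagonal_mul_diagonal]
        convert Matrix.diagonal_one with j
        exact inv_mul_cancel₀ (hne κ hκ j)
      exact ⟨⟨_, _, hmul, hmul'⟩, rfl⟩
    · intro z
      rw [hquad κ hκ z]
      have hsum : ∑ j, z j ^ 2 * (((sfun κ - lam2 j) ^ 2)⁻¹)
          ≤ ∑ j, z j ^ 2 * (4 * (lamhat ^ 2)⁻¹) := by
        refine Finset.sum_le_sum fun j _ => ?_
        have hg := hgap κ hκ j
        have h2 : (lamhat ^ 2 / 4) ≤ (sfun κ - lam2 j) ^ 2 := by nlinarith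
        have h3 : ((sfun κ - lam2 j) ^ 2)⁻¹ ≤ (lamhat ^ 2 / 4)⁻¹ :=
          inv_anti₀ (by positivity) h2
        have h4 : (lamhat ^ 2 / 4)⁻¹ = 4 * (lamhat ^ 2)⁻¹ := by field_simp
        nlinarith [sq_nonneg (z j), h4 ▸ h3]
      have hzz : z ⬝ᵥ z = ∑ j, z j ^ 2 := by simp [dotProduct, ← sq]
      have hsum2 : ∑ j, z j ^ 2 * (4 * (lamhat ^ 2)⁻¹) = (2 * lamhat⁻¹) ^ 2 * (z ⬝ᵥ z) := by
        rw [hzz, ← Finset.sum_mul]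
        ring
      calc Real.sqrt (∑ j, z j ^ 2 * (((sfun κ - lam2 j) ^ 2)⁻¹))
          ≤ Real.sqrt ((2 * lamhat⁻¹) ^ 2 * (z ⬝ᵥ z)) := by
            apply Real.sqrt_le_sqrt; rw [← hsum2]; exact hsum
        _ = 2 * lamhat⁻¹ * Real.sqrt (z ⬝ᵥ z) := by
            rw [Real.sqrt_mul (sq_nonneg _), Real.sqrt_sq (by positivity)]
  -- strict monotonicity
  have hmono : StrictMonoOn f (Set.Ici (1 / 2 : ℝ)) := by
    intro κ₁ hκ₁ κ₂ hκ₂ hlt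
    simp only [Set.mem_Ici] at hκ₁ hκ₂
    have hκ₁0 : 0 < κ₁ := by linarith
    have hκ₂0 : 0 < κ₂ := by linarith
    -- difference of s values
    have hΔ : |sfun κ₁ - sfun κ₂| ≤ lamhat / 2 * (κ₂ - κ₁) := by
      have he : sfun κ₁ - sfun κ₂ = (κ₂⁻¹ - κ₁⁻¹) * c := by rw [hsfun]; simp only; ring
      have he2 : κ₁⁻¹ - κ₂⁻¹ = (κ₂ - κ₁) / (κ₁ * κ₂) := by field_simp
      have he3 : κ₁⁻¹ - κ₂⁻¹ ≤ 4 * (κ₂ - κ₁) := by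
        have h14 : (1:ℝ)/4 ≤ κ₁ * κ₂ := by nlinarith
        rw [he2, div_le_iff₀ (by positivity)]
        nlinarith [h14, hlt.le]
      have he4 : 0 ≤ κ₁⁻¹ - κ₂⁻¹ := by
        rw [he2]; exact div_nonneg (by linarith) (by positivity)
      rw [he, abs_mul, show |κ₂⁻¹ - κ₁⁻¹| = κ₁⁻¹ - κ₂⁻¹ by
        rw [abs_sub_comm, abs_of_nonneg he4]]
      calc (κ₁⁻¹ - κ₂⁻¹) * |c| ≤ 4 * (κ₂ - κ₁) * (lamhat / 8) :=
            mul_le_mul he3 hcabs (abs_nonneg c) (by linarith)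
        _ = lamhat / 2 * (κ₂ - κ₁) := by ring
    have hT : |∑ j, (b j ^ 2 * (((sfun κ₂ - lam2 j) ^ 2)⁻¹)
        - b j ^ 2 * (((sfun κ₁ - lam2 j) ^ 2)⁻¹))| ≤ (κ₂ - κ₁) / 27 := by
      have hper : ∀ j : Fin (N - 1), |b j ^ 2 * (((sfun κ₂ - lam2 j) ^ 2)⁻¹)
          - b j ^ 2 * (((sfun κ₁ - lam2 j) ^ 2)⁻¹)|
          ≤ b j ^ 2 * (2 / (3 / 4 * lamhat) ^ 3 * (lamhat / 2 * (κ₂ - κ₁))) := by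
        intro j
        rw [show b j ^ 2 * (((sfun κ₂ - lam2 j) ^ 2)⁻¹) - b j ^ 2 * (((sfun κ₁ - lam2 j) ^ 2)⁻¹)
            = b j ^ 2 * ((((sfun κ₂ - lam2 j) ^ 2)⁻¹) - (((sfun κ₁ - lam2 j) ^ 2)⁻¹)) by ring,
          abs_mul, abs_of_nonneg (sq_nonneg (b j))]
        have hd := aux_inv_sq_diff hm0 (hgap κ₁ hκ₁ j) (hgap κ₂ hκ₂ j)
        have hd2 : |(sfun κ₁ - lam2 j) - (sfun κ₂ - lam2 j)| = |sfun κ₁ - sfun κ₂| := by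
          congr 1; ring
        rw [hd2] at hd
        have : |(((sfun κ₂ - lam2 j) ^ 2)⁻¹) - (((sfun κ₁ - lam2 j) ^ 2)⁻¹)|
            ≤ 2 / (3 / 4 * lamhat) ^ 3 * (lamhat / 2 * (κ₂ - κ₁)) := by
          refine le_trans hd ?_
          have h23 : (0:ℝ) < 2 / (3 / 4 * lamhat) ^ 3 := by positivity
          exact mul_le_mul_of_nonneg_left hΔ (le_of_lt h23)
        exact mul_le_mul_of_nonneg_left this (sq_nonneg (b j))
      calc |∑ j, (b j ^ 2 * (((sfun κ₂ - lam2 j) ^ 2)⁻¹)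
            - b j ^ 2 * (((sfun κ₁ - lam2 j) ^ 2)⁻¹))|
          ≤ ∑ j, |b j ^ 2 * (((sfun κ₂ - lam2 j) ^ 2)⁻¹)
            - b j ^ 2 * (((sfun κ₁ - lam2 j) ^ 2)⁻¹)| := Finset.abs_sum_le_sum_abs _ _
        _ ≤ ∑ j, b j ^ 2 * (2 / (3 / 4 * lamhat) ^ 3 * (lamhat / 2 * (κ₂ - κ₁))) :=
            Finset.sum_le_sum fun j _ => hper j
        _ = (∑ j, b j ^ 2) * (2 / (3 / 4 * lamhat) ^ 3 * (lamhat / 2 * (κ₂ - κ₁))) := by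
            rw [← Finset.sum_mul]
        _ ≤ (lamhat / 8) ^ 2 * (2 / (3 / 4 * lamhat) ^ 3 * (lamhat / 2 * (κ₂ - κ₁))) := by
            apply mul_le_mul_of_nonneg_right hbb'
            exact mul_nonneg (by positivity) (mul_nonneg (by positivity) (by linarith))
        _ = (κ₂ - κ₁) / 27 := by
            field_simp
            ring
    have hd : f κ₂ - f κ₁ = (κ₂ ^ 2 - κ₁ ^ 2)
        + ∑ j, (b j ^ 2 * (((sfun κ₂ - lam2 j) ^ 2)⁻¹)
          - b j ^ 2 * (((sfun κ₁ - lam2 j) ^ 2)⁻¹)) := by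
      rw [hfeq κ₁ hκ₁, hfeq κ₂ hκ₂, Finset.sum_sub_distrib]
      ring
    have habsT := abs_le.mp hT
    have : 0 < f κ₂ - f κ₁ := by
      rw [hd]
      nlinarith [habsT.1]
    linarith
  -- sign at the endpoints
  have hneg : f (1 / 2) < 0 := by
    rw [hfeq (1/2) (le_refl _)]
    have hsum : ∑ j, b j ^ 2 * (((sfun (1/2) - lam2 j) ^ 2)⁻¹) ≤ 1 / 36 := by
      have hstep : ∑ j, b j ^ 2 * (((sfun (1/2) - lam2 j) ^ 2)⁻¹)
          ≤ ∑ j, b j ^ 2 * (((3 / 4 * lamhat) ^ 2)⁻¹) := by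
        refine Finset.sum_le_sum fun j _ => ?_
        have hg := hgap (1/2) (le_refl _) j
        have h2 : ((sfun (1/2) - lam2 j) ^ 2)⁻¹ ≤ ((3 / 4 * lamhat) ^ 2)⁻¹ := by
          apply inv_anti₀ (by positivity)
          nlinarith
        nlinarith [sq_nonneg (b j)]
      refine le_trans hstep ?_
      rw [← Finset.sum_mul]
      calc (∑ j, b j ^ 2) * (((3 / 4 * lamhat) ^ 2)⁻¹)
          ≤ (lamhat / 8) ^ 2 * (((3 / 4 * lamhat) ^ 2)⁻¹) := by
            apply mul_le_mul_of_nonneg_right hbb'; positivity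
        _ = 1 / 36 := by field_simp; ring
    have hρ' := abs_le.mp hρ
    nlinarith [hsum, hρ'.1]
  have hpos : 0 < f 2 := by
    rw [hfeq 2 (by norm_num)]
    have hsum : 0 ≤ ∑ j, b j ^ 2 * (((sfun 2 - lam2 j) ^ 2)⁻¹) := by positivity
    have hρ' := abs_le.mp hρ
    nlinarith
  -- continuity and IVT
  have hcont : ContinuousOn f (Set.Icc (1 / 2 : ℝ) 2) := by
    have heq : ∀ κ ∈ Set.Icc (1 / 2 : ℝ) 2,
        κ ^ 2 + (∑ j, b j ^ 2 * (((sfun κ - lam2 j) ^ 2)⁻¹)) - 1 - ρ = f κ :=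
      fun κ hκ => (hfeq κ hκ.1).symm
    refine ContinuousOn.congr ?_ (fun κ hκ => (heq κ hκ).symm)
    have hsf : ContinuousOn sfun (Set.Icc (1 / 2 : ℝ) 2) := by
      rw [hsfun]
      refine continuousOn_const.sub ((ContinuousOn.inv₀ continuousOn_id ?_).mul
        continuousOn_const)
      intro κ hκ
      simp only [id_eq]
      intro h
      rw [h] at hκ
      exact absurd hκ.1 (by norm_num)
    refine ContinuousOn.sub (ContinuousOn.sub (ContinuousOn.add ?_ ?_) continuousOn_const)
      continuousOn_const
    · exact (continuous_pow 2).continuousOn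
    · refine continuousOn_finset_sum _ fun j _ => ?_
      refine ContinuousOn.mul continuousOn_const (ContinuousOn.inv₀ ?_ ?_)
      · exact ((hsf.sub continuousOn_const).pow 2)
      · intro κ hκ
        have := hne κ hκ.1 j
        intro h
        apply this
        have : (sfun κ - lam2 j) = 0 := by nlinarith [sq_abs (sfun κ - lam2 j), h]
        linarith [this]
  have h0mem : (0 : ℝ) ∈ Set.Icc (f (1 / 2)) (f 2) := ⟨le_of_lt hneg, le_of_lt hpos⟩
  obtain ⟨κ₀, hκ₀mem, hκ₀⟩ := intermediate_value_Icc (by norm_num : (1/2:ℝ) ≤ 2) hcont h0mem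
  have hκ₀Ici : κ₀ ∈ Set.Ici (1 / 2 : ℝ) := hκ₀mem.1
  have hne1 : κ₀ ≠ 1 / 2 := by intro h; rw [h] at hκ₀; linarith
  have hne2 : κ₀ ≠ 2 := by intro h; rw [h] at hκ₀; linarith
  refine ⟨fun κ hκ => partA κ hκ, hmono, hneg, hpos, κ₀,
    ⟨⟨lt_of_le_of_ne hκ₀mem.1 (Ne.symm hne1), lt_of_le_of_ne hκ₀mem.2 hne2⟩, hκ₀⟩, ?_⟩
  intro κ' hκ' hfκ'
  exact hmono.injOn hκ' hκ₀Ici (by rw [hfκ', hκ₀])
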